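/- arXiv:1205.6043 — 2 statements merged into one kernel-verified Lean document; each statement's English description precedes it below -/
import Mathlib

section
/- Under Efron's BCD(p), if 0 ≤ m_j < j/2 and m_j ≤ n_1 < j − m_j, then P(N_1(n) = n_1 | N_1(j) = m_j) = C(n−j, n_1−m_j) · p^{n_1−m_j} · q^{n−j−n_1+m_j}, where q = 1−p. -/
open Finset

/-- Number of treatment-1 assignments among the first `j` patients. -/
def count1 {n : ℕ} (t : Fin n → Bool) (j : ℕ) : ℕ :=
  ((Finset.univ : Finset (Fin n)).filter (fun i : Fin n => (i : ℕ) < j ∧ t i = true)).card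

/-- Probability of an assignment sequence under the restricted randomization
procedure `φ`, where `φ j m = P(T_{j+1} = 1 | N_1(j) = m)`. -/
noncomputable def seqProb {n : ℕ} (φ : ℕ → ℕ → ℝ) (t : Fin n → Bool) : ℝ :=
  ∏ i : Fin n,
    if t i = true then φ (i : ℕ) (count1 t (i : ℕ)) else 1 - φ (i : ℕ) (count1 t (i : ℕ))

open Classical in
/-- Probability of an event under the randomization procedure `φ`. -/
noncomputable def pr {n : ℕ} (φ : ℕ → ℕ → ℝ) (S : Set (Fin n → Bool)) : ℝ :=
  ∑ t : Fin n → Bool, if t ∈ S then seqProb φ t else 0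

/-- Conditional probability `P(A | B)` under the randomization procedure `φ`. -/
noncomputable def condPr {n : ℕ} (φ : ℕ → ℕ → ℝ) (A B : Set (Fin n → Bool)) : ℝ :=
  pr φ (A ∩ B) / pr φ B

/-- Efron's biased coin design: `efron p j m = P(T_{j+1} = 1 | N_1(j) = m)`. -/
noncomputable def efron (p : ℝ) (j m : ℕ) : ℝ :=
  if 2 * m = j then 1/2 else if 2 * m < j then p else 1 - p

lemma count1_snoc {n : ℕ} (t : Fin n → Bool) (b : Bool) (j : ℕ) :
    count1 (Fin.snoc t b) j = count1 t j + (if n < j ∧ b = true then 1 else 0) := by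
  unfold count1
  rw [Finset.card_filter, Finset.card_filter, Fin.sum_univ_castSucc]
  simp [Fin.snoc_castSucc, Fin.snoc_last]
lemma count1_cap {n : ℕ} (t : Fin n → Bool) {j : ℕ} (h : n ≤ j) :
    count1 t j = count1 t n := by
  unfold count1
  congr 1
  apply Finset.filter_congr
  intro i _
  have := i.is_lt
  constructor <;> intro hh <;> exact ⟨by omega, hh.2⟩
lemma count1_mono {n : ℕ} (t : Fin n → Bool) {j j' : ℕ} (h : j ≤ j') :
    count1 t j ≤ count1 t j' := by
  apply Finset.card_le_card
  intro i hi
  simp only [Finset.mem_filter] at *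
  exact ⟨hi.1, by omega, hi.2.2⟩
lemma count1_le_add {n : ℕ} (t : Fin n → Bool) {j j' : ℕ} (h : j ≤ j') :
    count1 t j' ≤ count1 t j + (j' - j) := by
  unfold count1
  have hsub : (Finset.univ.filter (fun i : Fin n => (i : ℕ) < j' ∧ t i = true)) ⊆
      (Finset.univ.filter (fun i : Fin n => (i : ℕ) < j ∧ t i = true)) ∪
      (Finset.univ.filter (fun i : Fin n => j ≤ (i : ℕ) ∧ (i : ℕ) < j')) := by
    intro i hi
    simp only [Finset.mem_filter, Finset.mem_union, Finset.mem_univ, true_and] at *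
    by_cases hc : (i : ℕ) < j
    · exact Or.inl ⟨hc, hi.2⟩
    · exact Or.inr ⟨by omega, hi.1⟩
  calc _ ≤ _ := Finset.card_le_card hsub
    _ ≤ _ + _ := Finset.card_union_le _ _
    _ ≤ _ := by
        gcongr
        rw [← Finset.card_range (j' - j)]
        apply Finset.card_le_card_of_injOn (fun i : Fin n => (i : ℕ) - j)
          (t := Finset.range (j' - j))
        · intro i hi
          simp only [Finset.coe_filter, Set.mem_setOf_eq, Finset.mem_coe, Finset.mem_filter, Finset.mem_univ, true_and] at hi
          simp only [Finset.coe_range, Set.mem_Iio, Finset.mem_coe, Finset.mem_range]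
          omega
        · intro a ha b hb hab
          simp only [Finset.coe_filter, Set.mem_setOf_eq, Finset.mem_univ, true_and] at ha hb
          simp only at hab
          exact Fin.ext (by omega)
lemma count1_snoc_le {n : ℕ} (t : Fin n → Bool) (b : Bool) {j : ℕ} (h : j ≤ n) :
    count1 (Fin.snoc t b) j = count1 t j := by
  rw [count1_snoc]
  simp only [if_neg (by omega : ¬ (n < j ∧ b = true)), add_zero]
lemma seqProb_snoc {n : ℕ} (φ : ℕ → ℕ → ℝ) (t : Fin n → Bool) (b : Bool) :
    seqProb φ (Fin.snoc t b) = seqProb φ t *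
      (if b = true then φ n (count1 t n) else 1 - φ n (count1 t n)) := by
  unfold seqProb
  rw [Fin.prod_univ_castSucc]
  congr 1
  · apply Finset.prod_congr rfl
    intro i _
    rw [Fin.snoc_castSucc, Fin.coe_castSucc, count1_snoc_le t b (le_of_lt i.is_lt)]
  · rw [Fin.snoc_last, Fin.val_last, count1_snoc_le t b le_rfl]
lemma sum_snoc {n : ℕ} (f : (Fin (n + 1) → Bool) → ℝ) :
    ∑ u : Fin (n + 1) → Bool, f u
      = ∑ t : Fin n → Bool, (f (Fin.snoc t false) + f (Fin.snoc t true)) := by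
  rw [← (Fin.snocEquiv (fun _ => Bool)).sum_comp f]
  rw [Fintype.sum_prod_type_right]
  apply Finset.sum_congr rfl
  intro t _
  rw [Fintype.sum_bool, add_comm]
  rfl
lemma pr_B_snoc {n j m : ℕ} (φ : ℕ → ℕ → ℝ) (h : j ≤ n) :
    pr φ {u : Fin (n + 1) → Bool | count1 u j = m}
      = pr φ {t : Fin n → Bool | count1 t j = m} := by
  unfold pr
  rw [sum_snoc]
  apply Finset.sum_congr rfl
  intro t _
  simp only [Set.mem_setOf_eq, count1_snoc_le t false h, count1_snoc_le t true h]
  by_cases hc : count1 t j = m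
  · rw [if_pos hc, if_pos hc, if_pos hc, seqProb_snoc, seqProb_snoc]
    simp only [reduceIte, Bool.false_eq_true]
    ring
  · rw [if_neg hc, if_neg hc, if_neg hc, add_zero]
lemma key (p : ℝ) (j m : ℕ) :
    ∀ n, j ≤ n → ∀ n1, m ≤ n1 → n1 < j - m →
    pr (efron p) ({t : Fin n → Bool | count1 t n = n1} ∩ {t : Fin n → Bool | count1 t j = m})
      = ((n - j).choose (n1 - m) : ℝ) * p ^ (n1 - m) * (1 - p) ^ (n - j - (n1 - m)) *
        pr (efron p) {t : Fin n → Bool | count1 t j = m} := by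
  intro n hn
  induction n, hn using Nat.le_induction with
  | base =>
    intro n1 h1 h2
    rcases Nat.eq_or_lt_of_le h1 with h1' | h1'
    · subst h1'
      rw [Set.inter_self]
      simp [Nat.sub_self]
    · have hz : pr (efron p)
          ({t : Fin j → Bool | count1 t j = n1} ∩ {t : Fin j → Bool | count1 t j = m}) = 0 := by
        unfold pr
        apply Finset.sum_eq_zero
        intro t _
        rw [if_neg]
        rintro ⟨h3, h4⟩
        simp only [Set.mem_setOf_eq] at h3 h4
        omega
      rw [hz, Nat.sub_self, Nat.choose_eq_zero_of_lt (by omega)]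
      simp
  | succ n hn IH =>
    intro n1 h1 h2
    have hmono : ∀ t : Fin n → Bool, count1 t j ≤ count1 t n := fun t => count1_mono t hn
    have hbd : ∀ t : Fin n → Bool, count1 t n ≤ count1 t j + (n - j) :=
      fun t => count1_le_add t hn
    have key1 : pr (efron p)
        ({u : Fin (n+1) → Bool | count1 u (n+1) = n1} ∩ {u : Fin (n+1) → Bool | count1 u j = m})
      = (1 - p) * pr (efron p)
          ({t : Fin n → Bool | count1 t n = n1} ∩ {t : Fin n → Bool | count1 t j = m})
        + p * pr (efron p)
          ({t : Fin n → Bool | count1 t n + 1 = n1} ∩ {t : Fin n → Bool | count1 t j = m}) := by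
      unfold pr
      rw [sum_snoc, Finset.mul_sum, Finset.mul_sum, ← Finset.sum_add_distrib]
      apply Finset.sum_congr rfl
      intro t _
      simp only [Set.mem_inter_iff, Set.mem_setOf_eq]
      rw [count1_snoc t false (n+1), count1_snoc t true (n+1),
        count1_snoc_le t false hn, count1_snoc_le t true hn,
        count1_cap t (Nat.le_succ n), seqProb_snoc, seqProb_snoc]
      simp only [Bool.false_eq_true, if_false, if_true, and_true, Nat.lt_succ_self, true_and,
        add_zero]
      congr 1
      · by_cases hc : count1 t n = n1 ∧ count1 t j = m
        · have h2n : 2 * count1 t n < n := by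
            have := hbd t
            omega
          have hef : efron p n (count1 t n) = p := by
            unfold efron
            rw [if_neg (by omega), if_pos h2n]
          rw [if_pos hc, if_pos hc, hef]
          ring
        · rw [if_neg hc, if_neg hc, mul_zero]
      · by_cases hc : count1 t n + 1 = n1 ∧ count1 t j = m
        · have h2n : 2 * count1 t n < n := by
            have := hbd t
            omega
          have hef : efron p n (count1 t n) = p := by
            unfold efron
            rw [if_neg (by omega), if_pos h2n]
          rw [if_pos hc, if_pos hc, hef]
          ring
        · rw [if_neg hc, if_neg hc, mul_zero]
    rw [key1, pr_B_snoc (efron p) hn]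
    rcases Nat.eq_or_lt_of_le h1 with h1' | h1'
    · -- n1 = m
      have hz : pr (efron p)
          ({t : Fin n → Bool | count1 t n + 1 = n1} ∩ {t : Fin n → Bool | count1 t j = m}) = 0 := by
        unfold pr
        apply Finset.sum_eq_zero
        intro t _
        rw [if_neg]
        rintro ⟨h3, h4⟩
        simp only [Set.mem_setOf_eq] at h3 h4
        have := hmono t
        omega
      rw [hz, IH n1 h1 h2, mul_zero, add_zero, ← h1', Nat.sub_self]
      rw [show n + 1 - j - 0 = (n - j - 0) + 1 by omega]
      simp only [Nat.choose_zero_right, Nat.cast_one, pow_zero, Nat.sub_zero]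
      ring
    · -- m < n1
      have hset : {t : Fin n → Bool | count1 t n + 1 = n1} = {t : Fin n → Bool | count1 t n = n1 - 1} := by
        ext t
        simp only [Set.mem_setOf_eq]
        omega
      rw [hset, IH n1 h1 h2, IH (n1 - 1) (by omega) (by omega)]
      obtain ⟨k0, hk0⟩ : ∃ k0, n1 - m = k0 + 1 := ⟨n1 - m - 1, by omega⟩
      have hk1 : n1 - 1 - m = k0 := by omega
      set L := n - j with hL
      have hL1 : n + 1 - j = L + 1 := by omega
      rw [hk0, hk1, hL1]
      by_cases hkL : k0 + 1 ≤ L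
      · obtain ⟨d, hd⟩ : ∃ d, L = (k0 + 1) + d := ⟨L - (k0 + 1), by omega⟩
        rw [hd, show (k0 + 1) + d - (k0 + 1) = d by omega, show (k0 + 1) + d - k0 = d + 1 by omega,
          show (k0 + 1) + d + 1 - (k0 + 1) = d + 1 by omega,
          show (k0 + 1) + d + 1 = ((k0 + d) + 1) + 1 by omega,
          Nat.choose_succ_succ ((k0 + d) + 1) k0]
        rw [show (k0 + d) + 1 = (k0 + 1) + d by omega]
        push_cast
        ring
      · by_cases hkL2 : k0 = L
        · rw [hkL2, Nat.choose_eq_zero_of_lt (by omega), Nat.choose_self, Nat.choose_self,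
            Nat.sub_self, show L + 1 - (L + 1) = 0 by omega]
          push_cast
          ring
        · rw [Nat.choose_eq_zero_of_lt (by omega), Nat.choose_eq_zero_of_lt (by omega),
            Nat.choose_eq_zero_of_lt (by omega)]
          push_cast
          ring

/-- Theorem 2.2, part (1), first case: under Efron's BCD(p), if
`0 ≤ m_j < j/2` and `m_j ≤ n_1 < j − m_j`, then
`P(N_1(n)=n_1 | N_1(j)=m_j) = C(n−j, n_1−m_j) p^{n_1−m_j} q^{n−j−n_1+m_j}`. -/
theorem bcd_cond_dist_low (n j m n1 : ℕ) (p : ℝ) (hp : 1 / 2 ≤ p) (hp1 : p ≤ 1)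
    (hj1 : 1 ≤ j) (hjn : j < n) (hbal : 2 * m < j)
    (hlo : m ≤ n1) (hhi : n1 < j - m)
    (hpos : 0 < pr (efron p) {t : Fin n → Bool | count1 t j = m}) :
    condPr (efron p) {t : Fin n → Bool | count1 t n = n1}
        {t : Fin n → Bool | count1 t j = m}
      = ((n - j).choose (n1 - m) : ℝ) * p ^ (n1 - m) * (1 - p) ^ (n - j - (n1 - m)) := by
  have hkey := key p j m n (le_of_lt hjn) n1 hlo hhi
  rw [condPr, hkey, mul_div_assoc, div_self (ne_of_gt hpos), mul_one]
end

section
/- Under Efron's BCD(p), if j/2 < m_j ≤ j and n − m_j < n_1 ≤ n − j + m_j, then P(N_1(n) = n_1 | N_1(j) = m_j) = C(n−j, n_1−m_j) · p^{n−j−n_1+m_j} · q^{n_1−m_j}, where q = 1−p. -/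
open Finset

-- count1 as a sum
lemma count1_eq_sum {n : ℕ} (t : Fin n → Bool) (j : ℕ) :
    count1 t j = ∑ x : Fin n, if (x : ℕ) < j ∧ t x = true then 1 else 0 := by
  classical
  rw [count1, Finset.card_filter]

-- sum over Fin n split as Fin j ⊕ Fin (n-j)
def finSplit (j n : ℕ) (h : j ≤ n) : Fin n ≃ (Fin j ⊕ Fin (n - j)) where
  toFun x := if h' : (x : ℕ) < j then Sum.inl ⟨x, h'⟩ else Sum.inr ⟨(x : ℕ) - j, by omega⟩
  invFun y := Sum.elim (fun a : Fin j => (⟨(a : ℕ), lt_of_lt_of_le a.2 h⟩ : Fin n))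
    (fun b : Fin (n - j) => (⟨j + (b : ℕ), by have := b.2; omega⟩ : Fin n)) y
  left_inv x := by
    by_cases h' : (x : ℕ) < j
    · simp [h']
    · simp only [h', dif_neg, not_false_iff, Sum.elim_inr]
      apply Fin.ext
      show j + ((x : ℕ) - j) = (x : ℕ)
      omega
  right_inv y := by
    rcases y with a | b
    · simp [a.2]
    · have : ¬ (j + (b : ℕ) < j) := by omega
      simp only [Sum.elim_inr, this, dif_neg, not_false_iff]
      refine (dif_neg this).trans ?_
      congr 1
      apply Fin.ext
      show j + (b : ℕ) - j = (b : ℕ)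
      omega

lemma sum_split {j n : ℕ} (h : j ≤ n) (f : Fin n → ℕ) :
    ∑ x : Fin n, f x = (∑ a : Fin j, f ⟨(a : ℕ), by omega⟩)
      + ∑ b : Fin (n - j), f ⟨j + (b : ℕ), by have := b.2; omega⟩ := by
  rw [← Equiv.sum_comp (finSplit j n h).symm f, Fintype.sum_sum_type]
  simp [finSplit]

lemma prod_split {j n : ℕ} (h : j ≤ n) (f : Fin n → ℝ) :
    ∏ x : Fin n, f x = (∏ a : Fin j, f ⟨(a : ℕ), by omega⟩)
      * ∏ b : Fin (n - j), f ⟨j + (b : ℕ), by have := b.2; omega⟩ := by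
  rw [← Equiv.prod_comp (finSplit j n h).symm f, Fintype.prod_sum_type]
  simp [finSplit]

def glue {j n : ℕ} (h : j ≤ n) (u : Fin j → Bool) (v : Fin (n - j) → Bool) :
    Fin n → Bool :=
  fun x => if h' : (x : ℕ) < j then u ⟨x, h'⟩ else v ⟨(x : ℕ) - j, by omega⟩

lemma glue_lt {j n : ℕ} (h : j ≤ n) (u : Fin j → Bool) (v : Fin (n - j) → Bool)
    (x : Fin n) (h' : (x : ℕ) < j) : glue h u v x = u ⟨x, h'⟩ := by
  simp [glue, h']

lemma glue_ge {j n : ℕ} (h : j ≤ n) (u : Fin j → Bool) (v : Fin (n - j) → Bool)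
    (b : Fin (n - j)) : glue h u v ⟨j + (b : ℕ), by have := b.2; omega⟩ = v b := by
  have h1 : ¬ (j + (b : ℕ) < j) := by omega
  simp only [glue, h1, dif_neg, not_false_iff]
  congr 1
  apply Fin.ext
  show j + (b : ℕ) - j = (b : ℕ)
  omega

lemma count1_glue_le {j n : ℕ} (h : j ≤ n) (u : Fin j → Bool) (v : Fin (n - j) → Bool)
    (i : ℕ) (hi : i ≤ j) : count1 (glue h u v) i = count1 u i := by
  rw [count1_eq_sum, count1_eq_sum, sum_split h]
  have h2 : ∀ b : Fin (n - j),
      (if (j + (b : ℕ) < i ∧ glue h u v ⟨j + (b : ℕ), by have := b.2; omega⟩ = true)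
        then 1 else 0) = 0 := by
    intro b
    have : ¬ (j + (b : ℕ) < i) := by omega
    simp [this]
  rw [Finset.sum_congr rfl (fun b _ => h2 b), Finset.sum_const, smul_zero, add_zero]
  apply Finset.sum_congr rfl
  intro a _
  rw [glue_lt h u v _ a.2]

lemma count1_glue_add {j n : ℕ} (h : j ≤ n) (u : Fin j → Bool) (v : Fin (n - j) → Bool)
    (i : ℕ) : count1 (glue h u v) (j + i) = count1 u j + count1 v i := by
  rw [count1_eq_sum, count1_eq_sum, count1_eq_sum, sum_split h]
  congr 1
  · apply Finset.sum_congr rfl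
    intro a _
    rw [glue_lt h u v _ a.2]
    have : ((a : ℕ) < j + i) ↔ ((a : ℕ) < j) := by constructor <;> intro <;> [exact a.2; omega]
    simp [this]
  · apply Finset.sum_congr rfl
    intro b _
    rw [glue_ge h u v b]
    have : (j + (b : ℕ) < j + i) ↔ ((b : ℕ) < i) := by omega
    simp [this]

lemma seqProb_glue {j n : ℕ} (h : j ≤ n) (φ : ℕ → ℕ → ℝ)
    (u : Fin j → Bool) (v : Fin (n - j) → Bool) :
    seqProb φ (glue h u v)
      = seqProb φ u * seqProb (fun i m' => φ (j + i) (count1 u j + m')) v := by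
  rw [seqProb, prod_split h, seqProb, seqProb]
  congr 1
  · apply Finset.prod_congr rfl
    intro a _
    have e1 : glue h u v ⟨(a : ℕ), lt_of_lt_of_le a.2 h⟩ = u a := by
      rw [glue_lt h u v _ a.2]
    have e2 : count1 (glue h u v) ((⟨(a : ℕ), lt_of_lt_of_le a.2 h⟩ : Fin n) : ℕ)
        = count1 u (a : ℕ) := count1_glue_le h u v _ (le_of_lt a.2)
    simp only [Fin.val_mk, e1, e2]
  · apply Finset.prod_congr rfl
    intro b _
    have e1 := glue_ge h u v b
    have e2 : count1 (glue h u v) (j + (b : ℕ)) = count1 u j + count1 v (b : ℕ) :=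
      count1_glue_add h u v (b : ℕ)
    simp only [Fin.val_mk, e1, e2]

lemma count1_zero {k : ℕ} (t : Fin k → Bool) : count1 t 0 = 0 := by
  simp [count1]

lemma count1_cons_succ {k : ℕ} (b : Bool) (v0 : Fin k → Bool) (i : ℕ) :
    count1 (Fin.cons b v0) (i + 1) = (if b = true then 1 else 0) + count1 v0 i := by
  rw [count1_eq_sum, count1_eq_sum, Fin.sum_univ_succ]
  congr 1
  · simp
  · apply Finset.sum_congr rfl
    intro y _
    have h1 : ((y.succ : Fin (k + 1)) : ℕ) = (y : ℕ) + 1 := rfl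
    rw [h1, Fin.cons_succ]
    have : ((y : ℕ) + 1 < i + 1) ↔ ((y : ℕ) < i) := by omega
    simp [this]

lemma sum_seqProb_one : ∀ (k : ℕ) (ψ : ℕ → ℕ → ℝ),
    ∑ v : Fin k → Bool, seqProb ψ v = 1 := by
  intro k
  induction k with
  | zero => intro ψ; simp [seqProb]
  | succ k ih =>
    intro ψ
    rw [← Equiv.sum_comp (Fin.consEquiv fun _ : Fin (k + 1) => Bool) (seqProb ψ),
      Fintype.sum_prod_type]
    have key : ∀ (b : Bool) (v0 : Fin k → Bool),
        seqProb ψ (Fin.cons b v0)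
          = (if b = true then ψ 0 0 else 1 - ψ 0 0)
            * seqProb (fun i m => ψ (i + 1) ((if b = true then 1 else 0) + m)) v0 := by
      intro b v0
      rw [seqProb, seqProb, Fin.prod_univ_succ]
      congr 1
      · simp [count1_zero]
      · apply Finset.prod_congr rfl
        intro y _
        have h1 : ((y.succ : Fin (k + 1)) : ℕ) = (y : ℕ) + 1 := rfl
        rw [h1, Fin.cons_succ, count1_cons_succ]
    calc (∑ b : Bool, ∑ v0 : Fin k → Bool, seqProb ψ ((Fin.consEquiv fun _ => Bool) (b, v0)))
        = ∑ b : Bool, (if b = true then ψ 0 0 else 1 - ψ 0 0) := by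
          apply Finset.sum_congr rfl
          intro b _
          have e : ∀ v0 : Fin k → Bool,
              seqProb ψ ((Fin.consEquiv fun _ : Fin (k + 1) => Bool) (b, v0))
                = (if b = true then ψ 0 0 else 1 - ψ 0 0)
                  * seqProb (fun i m => ψ (i + 1) ((if b = true then 1 else 0) + m)) v0 :=
            fun v0 => key b v0
          rw [Finset.sum_congr rfl (fun v0 _ => e v0), ← Finset.mul_sum, ih, mul_one]
      _ = 1 := by
          simp only [Fintype.sum_bool, if_true, Bool.false_eq_true, if_false]
          ring

lemma count1_succ_split {k : ℕ} (t : Fin k → Bool) (i : ℕ) :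
    count1 t (i + 1) = count1 t i + ∑ x : Fin k, if (x : ℕ) = i ∧ t x = true then 1 else 0 := by
  rw [count1_eq_sum, count1_eq_sum, ← Finset.sum_add_distrib]
  apply Finset.sum_congr rfl
  intro x _
  split_ifs <;> simp_all <;> omega

lemma sum_eq_le_one {k : ℕ} (t : Fin k → Bool) (i : ℕ) :
    (∑ x : Fin k, if (x : ℕ) = i ∧ t x = true then 1 else 0) ≤ 1 := by
  classical
  calc (∑ x : Fin k, if (x : ℕ) = i ∧ t x = true then 1 else 0)
      ≤ ∑ x : Fin k, if (x : ℕ) = i then 1 else 0 := by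
        apply Finset.sum_le_sum
        intro x _
        split_ifs <;> simp_all
    _ ≤ 1 := by
        rw [← Finset.card_filter]
        apply Finset.card_le_one.2
        intro a ha b hb
        simp only [Finset.mem_filter] at ha hb
        exact Fin.ext (ha.2.trans hb.2.symm)

lemma count1_succ_le {k : ℕ} (t : Fin k → Bool) (i : ℕ) :
    count1 t (i + 1) ≤ count1 t i + 1 := by
  have := count1_succ_split t i
  have := sum_eq_le_one t i
  omega

lemma count1_le {k : ℕ} (t : Fin k → Bool) : ∀ i, count1 t i ≤ i := by
  intro i
  induction i with
  | zero => simp [count1_zero]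
  | succ i ih => have := count1_succ_le t i; omega

lemma count1_le_add_s8 {k : ℕ} (t : Fin k → Bool) :
    ∀ b a, a ≤ b → count1 t b ≤ count1 t a + (b - a) := by
  intro b
  induction b with
  | zero => intro a ha; have : a = 0 := by omega
            subst this; simp
  | succ b ih =>
    intro a ha
    rcases Nat.eq_or_lt_of_le ha with rfl | h
    · simp
    · have h1 := count1_succ_le t b
      have h2 := ih a (by omega)
      omega

lemma count1_eq_card_true {K : ℕ} (v : Fin K → Bool) :
    count1 v K = ((univ : Finset (Fin K)).filter (fun x => v x = true)).card := by
  rw [count1]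
  congr 1
  apply Finset.filter_congr
  intro x _
  simp [x.2]

lemma seqProb_suffix (p : ℝ) (j m K r : ℕ) (hbal : j < 2 * m)
    (hzr : K - r < 2 * m - j) (hrK : r ≤ K)
    (v : Fin K → Bool) (hv : count1 v K = r) :
    seqProb (fun i m' => efron p (j + i) (m + m')) v = (1 - p) ^ r * p ^ (K - r) := by
  have step : ∀ i : Fin K,
      (if v i = true then efron p (j + (i : ℕ)) (m + count1 v (i : ℕ))
        else 1 - efron p (j + (i : ℕ)) (m + count1 v (i : ℕ)))
      = (if v i = true then 1 - p else p) := by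
    intro i
    have h1 : count1 v K ≤ count1 v (i : ℕ) + (K - (i : ℕ)) :=
      count1_le_add_s8 v K (i : ℕ) (le_of_lt i.2)
    have h2 : count1 v (i : ℕ) ≤ (i : ℕ) := count1_le v _
    have hi := i.2
    have hgt : j + (i : ℕ) < 2 * (m + count1 v (i : ℕ)) := by omega
    have he : efron p (j + (i : ℕ)) (m + count1 v (i : ℕ)) = 1 - p := by
      rw [efron, if_neg (by omega), if_neg (by omega)]
    rw [he]
    split_ifs
    · rfl
    · ring
  rw [seqProb, Finset.prod_congr rfl (fun i _ => step i), Finset.prod_ite,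
    Finset.prod_const, Finset.prod_const]
  have hc1 : ((univ : Finset (Fin K)).filter (fun x => v x = true)).card = r := by
    rw [← count1_eq_card_true, hv]
  have hc2 : ((univ : Finset (Fin K)).filter (fun x => ¬ (v x = true))).card = K - r := by
    have := Finset.card_filter_add_card_filter_not
      (s := (univ : Finset (Fin K))) (p := fun x => v x = true)
    rw [Finset.card_univ, Fintype.card_fin] at this
    omega
  rw [hc1, hc2]

lemma card_count (K r : ℕ) :
    ((univ : Finset (Fin K → Bool)).filter (fun v => count1 v K = r)).card
      = K.choose r := by
  classical
  have : ((univ : Finset (Fin K → Bool)).filter (fun v => count1 v K = r)).card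
      = (Finset.powersetCard r (univ : Finset (Fin K))).card := by
    apply Finset.card_nbij' (i := fun v => (univ : Finset (Fin K)).filter (fun x => v x = true))
      (j := fun s => fun x => decide (x ∈ s))
    · intro v hv
      simp only [Finset.mem_coe, Finset.mem_filter, Finset.mem_univ, true_and] at hv
      rw [Finset.mem_coe, Finset.mem_powersetCard]
      exact ⟨Finset.subset_univ _, by rw [← count1_eq_card_true, hv]⟩
    · intro s hs
      rw [Finset.mem_coe, Finset.mem_powersetCard] at hs
      simp only [Finset.mem_coe, Finset.mem_filter, Finset.mem_univ, true_and]
      rw [count1_eq_card_true, ← hs.2]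
      congr 1
      ext x
      simp
    · intro v _
      funext x
      simp
    · intro s _
      ext x
      simp
  rw [this, Finset.card_powersetCard, Finset.card_fin]

def glueEquiv {j n : ℕ} (h : j ≤ n) :
    ((Fin j → Bool) × (Fin (n - j) → Bool)) ≃ (Fin n → Bool) where
  toFun q := glue h q.1 q.2
  invFun t := (fun a => t ⟨(a : ℕ), lt_of_lt_of_le a.2 h⟩,
    fun b => t ⟨j + (b : ℕ), by have := b.2; omega⟩)
  left_inv := by
    rintro ⟨u, v⟩
    simp only [Prod.mk.injEq]
    constructor
    · funext a
      rw [glue_lt h u v _ a.2]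
    · funext b
      exact glue_ge h u v b
  right_inv := by
    intro t
    funext x
    show glue h _ _ x = t x
    by_cases h' : (x : ℕ) < j
    · rw [glue_lt h _ _ _ h']
    · have h1 : ¬ ((x : ℕ) < j) := h'
      simp only [glue, h1, dif_neg, not_false_iff]
      congr 1
      apply Fin.ext
      show j + ((x : ℕ) - j) = (x : ℕ)
      omega


/-- Theorem 2.2, part (3), last case: under Efron's BCD(p), if
`j/2 < m_j ≤ j` and `n − m_j < n_1 ≤ n − j + m_j` (with `m_j ≤ n_1`), then
`P(N_1(n)=n_1 | N_1(j)=m_j) = C(n−j, n_1−m_j) p^{n−j−n_1+m_j} q^{n_1−m_j}`. -/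
theorem bcd_cond_dist_high (n j m n1 : ℕ) (p : ℝ) (hp : 1 / 2 ≤ p) (hp1 : p ≤ 1)
    (hj1 : 1 ≤ j) (hjn : j < n) (hbal : j < 2 * m) (hmj : m ≤ j)
    (hm : m ≤ n1) (hlo : n - m < n1) (hhi : n1 ≤ n - j + m)
    (hpos : 0 < pr (efron p) {t : Fin n → Bool | count1 t j = m}) :
    condPr (efron p) {t : Fin n → Bool | count1 t n = n1}
        {t : Fin n → Bool | count1 t j = m}
      = ((n - j).choose (n1 - m) : ℝ) * p ^ (n - j - (n1 - m)) * (1 - p) ^ (n1 - m) := by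
  classical
  have h : j ≤ n := le_of_lt hjn
  have hzr : (n - j) - (n1 - m) < 2 * m - j := by omega
  have hrK : n1 - m ≤ n - j := by omega
  have main : ∀ S : Set (Fin n → Bool), pr (efron p) S
      = ∑ u : Fin j → Bool, ∑ v : Fin (n - j) → Bool,
          (if glue h u v ∈ S then seqProb (efron p) (glue h u v) else 0) := by
    intro S
    rw [pr, ← Equiv.sum_comp (glueEquiv h), Fintype.sum_prod_type]
    rfl
  -- the probability of B as a sum over prefixes
  have hB : pr (efron p) {t : Fin n → Bool | count1 t j = m}
      = ∑ u : Fin j → Bool, if count1 u j = m then seqProb (efron p) u else 0 := by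
    rw [main]
    apply Finset.sum_congr rfl
    intro u _
    have hmem : ∀ v : Fin (n - j) → Bool,
        (glue h u v ∈ {t : Fin n → Bool | count1 t j = m}) ↔ count1 u j = m := by
      intro v
      rw [Set.mem_setOf_eq, count1_glue_le h u v j le_rfl]
    trans (∑ v : Fin (n - j) → Bool,
        (if count1 u j = m then seqProb (efron p) u else 0)
          * seqProb (fun i m' => efron p (j + i) (count1 u j + m')) v)
    · apply Finset.sum_congr rfl
      intro v _
      rw [seqProb_glue h (efron p) u v]
      by_cases h1 : count1 u j = m
      · rw [if_pos ((hmem v).2 h1), if_pos h1]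
      · rw [if_neg (fun hc => h1 ((hmem v).1 hc)), if_neg h1, zero_mul]
    · rw [← Finset.mul_sum, sum_seqProb_one, mul_one]
  -- the probability of A ∩ B
  have hAB : pr (efron p)
        ({t : Fin n → Bool | count1 t n = n1} ∩ {t : Fin n → Bool | count1 t j = m})
      = (((n - j).choose (n1 - m) : ℝ)
          * ((1 - p) ^ (n1 - m) * p ^ ((n - j) - (n1 - m))))
        * pr (efron p) {t : Fin n → Bool | count1 t j = m} := by
    rw [hB, main, Finset.mul_sum]
    apply Finset.sum_congr rfl
    intro u _
    have hgn : ∀ v : Fin (n - j) → Bool,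
        count1 (glue h u v) n = count1 u j + count1 v (n - j) := by
      intro v
      have h1 := count1_glue_add h u v (n - j)
      rwa [show j + (n - j) = n by omega] at h1
    have hmem : ∀ v : Fin (n - j) → Bool,
        (glue h u v ∈ ({t : Fin n → Bool | count1 t n = n1}
            ∩ {t : Fin n → Bool | count1 t j = m}))
          ↔ (count1 u j = m ∧ count1 v (n - j) = n1 - m) := by
      intro v
      rw [Set.mem_inter_iff, Set.mem_setOf_eq, Set.mem_setOf_eq,
        count1_glue_le h u v j le_rfl, hgn v]
      omega
    trans (∑ v : Fin (n - j) → Bool,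
        (if count1 u j = m then seqProb (efron p) u else 0)
          * (if count1 v (n - j) = n1 - m
              then (1 - p) ^ (n1 - m) * p ^ ((n - j) - (n1 - m)) else 0))
    · apply Finset.sum_congr rfl
      intro v _
      rw [seqProb_glue h (efron p) u v]
      by_cases h1 : count1 u j = m
      · by_cases h2 : count1 v (n - j) = n1 - m
        · rw [if_pos ((hmem v).2 ⟨h1, h2⟩), if_pos h1, if_pos h2, h1,
            seqProb_suffix p j m (n - j) (n1 - m) hbal hzr hrK v h2]
        · rw [if_neg (fun hc => h2 ((hmem v).1 hc).2), if_pos h1, if_neg h2, mul_zero]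
      · rw [if_neg (fun hc => h1 ((hmem v).1 hc).1), if_neg h1, zero_mul]
    · rw [← Finset.mul_sum, ← Finset.sum_filter, Finset.sum_const, card_count,
        nsmul_eq_mul]
      ring
  rw [condPr, hAB, mul_div_assoc, div_self (ne_of_gt hpos), mul_one]
  ring
end
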